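/- The minimal generating set of the affine semigroup P(a,b) consists exactly of the tuples (i_1, …, i_{a+b−1}) of elements of ℤ/mℤ such that: i_1, i_{a+b−1} ∈ {m−1, 0}; i_k − i_{k+1} ∈ {0, 1} (mod m) for 1 ≤ k ≤ a−1; and i_k − i_{k+1} ∈ {0, −1} (mod m) for a ≤ k ≤ a+b−2. In particular, since all these generators have level 1 and any product of level-1 elements has level ≥ 2, this generating set is minimal. -/

import Mathlib

open Finsupp in
/-- total mass (level) of a finitely supported ℕ-valued function -/
def fmass {α : Type*} (v : α →₀ ℕ) : ℕ := v.sum fun _ n => n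

lemma fmass_mapDomain {α β : Type*} (f : α → β) (v : α →₀ ℕ) :
    fmass (Finsupp.mapDomain f v) = fmass v :=
  Finsupp.sum_mapDomain_index (fun _ => rfl) (fun _ _ _ => rfl)

lemma fmass_add {α : Type*} (v w : α →₀ ℕ) : fmass (v + w) = fmass v + fmass w :=
  Finsupp.sum_add_index' (fun _ => rfl) (fun _ _ _ => rfl)

lemma fmass_single {α : Type*} (a : α) (n : ℕ) : fmass (Finsupp.single a n) = n :=
  Finsupp.sum_single_index rfl

lemma fmass_eq_zero {α : Type*} {v : α →₀ ℕ} : fmass v = 0 ↔ v = 0 := by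
  constructor
  · intro h
    ext p
    by_contra hp
    have hmem : p ∈ v.support := Finsupp.mem_support_iff.2 hp
    have := Finset.sum_eq_zero_iff.1 h p hmem
    exact hp this
  · rintro rfl; rfl

lemma mem_support_mapDomain {α β : Type*} (f : α → β) (v : α →₀ ℕ) {a : α}
    (h : a ∈ v.support) : f a ∈ (Finsupp.mapDomain f v).support := by
  classical
  rw [Finsupp.mem_support_iff]
  intro h0
  have hle : (Finsupp.single (f a) (v a)) (f a) ≤ (Finsupp.mapDomain f v) (f a) := by
    rw [Finsupp.mapDomain, Finsupp.sum_apply]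
    exact Finset.single_le_sum (f := fun x => (Finsupp.single (f x) (v x)) (f a))
      (fun _ _ => Nat.zero_le _) h
  rw [h0, Finsupp.single_eq_same] at hle
  exact (Finsupp.mem_support_iff.1 h) (Nat.le_zero.1 hle)

open Classical in
noncomputable def chainP {m : ℕ} (x : ℕ → ((ZMod m × ZMod m) →₀ ℕ)) :
    ℕ → ZMod m × ZMod m
  | 0 => if h : (x 0).support.Nonempty then h.choose else (0, 0)
  | (s+1) => if h : ∃ q ∈ (x (s+1)).support, q.1 = (chainP x s).2 then h.choose else (0, 0)

lemma finsupp_add_left_cancel {α : Type*} {a b c : α →₀ ℕ} (h : a + b = a + c) : b = c := by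
  ext p
  have h2 := congrArg (fun f => f p) h
  simp only [Finsupp.add_apply] at h2
  omega



/-- The set `X_{a,b}` of tuples over `ℤ/mℤ`. -/
def Xab (m a b : ℕ) : Set (Fin (a + b - 1) → ZMod m) :=
  {i | ∃ h0 : 0 < a + b - 1, ∃ hl : a + b - 2 < a + b - 1,
    i ⟨0, h0⟩ ∈ ({0, ((m - 1 : ℕ) : ZMod m)} : Set (ZMod m)) ∧
    i ⟨a + b - 2, hl⟩ ∈ ({0, ((m - 1 : ℕ) : ZMod m)} : Set (ZMod m)) ∧
    ∀ (k : ℕ) (hk : k + 1 < a + b - 1),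
      (k < a - 1 → i ⟨k, by omega⟩ - i ⟨k + 1, hk⟩ ∈ ({0, 1} : Set (ZMod m))) ∧
      (a - 1 ≤ k → i ⟨k, by omega⟩ - i ⟨k + 1, hk⟩ ∈ ({0, -1} : Set (ZMod m)))}

/-- The ambient product of the free monoids attached to the `a+b-2` internal vertices of
the caterpillar tree: at each slot, the free commutative monoid on pairs of boundary
labels in `ℤ/mℤ`. -/
abbrev BigM (m a b : ℕ) := Fin (a + b - 2) → ((ZMod m × ZMod m) →₀ ℕ)

/-- Validity of a generator label at slot `s` for the K-Pieri semigroups. -/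
def validPair (m a b : ℕ) (s : ℕ) (p : ZMod m × ZMod m) : Prop :=
  (s < a - 1 → p.1 - p.2 ∈ ({0, 1} : Set (ZMod m))) ∧
  (a - 1 ≤ s → p.1 - p.2 ∈ ({0, -1} : Set (ZMod m))) ∧
  (s = 0 → p.1 ∈ ({0, ((m - 1 : ℕ) : ZMod m)} : Set (ZMod m))) ∧
  (s = a + b - 3 → p.2 ∈ ({0, ((m - 1 : ℕ) : ZMod m)} : Set (ZMod m)))

/-- The embedding of a tuple of `X_{a,b}` as a level-one element of the fiber product:
at each slot, the single K-Pieri generator labelled by the two consecutive entries. -/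
noncomputable def embP (m a b : ℕ) (i : Fin (a + b - 1) → ZMod m) : BigM m a b :=
  fun s => match s with
  | ⟨sv, hs⟩ => Finsupp.single (i ⟨sv, by omega⟩, i ⟨sv + 1, by omega⟩) 1

lemma embP_apply (m a b : ℕ) (i : Fin (a + b - 1) → ZMod m) (sv : ℕ) (hs : sv < a + b - 2)
    (h1 : sv < a + b - 1) (h2 : sv + 1 < a + b - 1) :
    embP m a b i ⟨sv, hs⟩ = Finsupp.single (i ⟨sv, h1⟩, i ⟨sv + 1, h2⟩) 1 := rfl

/-- The toric fiber product semigroup `P(a,b)` — the submonoid of the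
product of the free K-Pieri monoids consisting of tuples supported on valid generator
labels whose consecutive boundary data (weight and level) match — is generated by the
embedded tuples of `X_{a,b}`, and these are exactly its minimal generators (atoms):
every element of `emb(X_{a,b})` is nonzero and admits no decomposition into two nonzero
elements of `P(a,b)`, and conversely. -/
theorem Pab_minimal_generators (m a b : ℕ) (hm : 2 ≤ m) (ha : 2 ≤ a) (hb : 2 ≤ b)
    (Pab : AddSubmonoid (BigM m a b))
    (hPab : (Pab : Set (BigM m a b)) =
      {x | (∀ s : Fin (a + b - 2), ∀ p ∈ (x s).support, validPair m a b s p) ∧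
        ∀ (s : ℕ) (hs : s + 1 < a + b - 2),
          Finsupp.mapDomain Prod.snd (x ⟨s, by omega⟩)
            = Finsupp.mapDomain Prod.fst (x ⟨s + 1, hs⟩)}) :
    AddSubmonoid.closure (embP m a b '' Xab m a b) = Pab ∧
    ∀ x : BigM m a b,
      x ∈ embP m a b '' Xab m a b ↔
        (x ∈ Pab ∧ x ≠ 0 ∧
          ¬∃ y z, y ∈ Pab ∧ z ∈ Pab ∧ y ≠ 0 ∧ z ≠ 0 ∧ x = y + z) := by
  classical
  have h0N : 0 < a + b - 2 := by omega
  have hmem : ∀ x : BigM m a b, x ∈ Pab ↔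
      ((∀ s : Fin (a + b - 2), ∀ p ∈ (x s).support, validPair m a b s p) ∧
        ∀ (s : ℕ) (hs : s + 1 < a + b - 2),
          Finsupp.mapDomain Prod.snd (x ⟨s, by omega⟩)
            = Finsupp.mapDomain Prod.fst (x ⟨s + 1, hs⟩)) := by
    intro x
    rw [← SetLike.mem_coe, hPab]
    rfl
  -- all slots have the same mass
  have massc : ∀ x : BigM m a b, x ∈ Pab → ∀ s : Fin (a + b - 2),
      fmass (x s) = fmass (x ⟨0, h0N⟩) := by
    intro x hx s
    obtain ⟨-, hx2⟩ := (hmem x).1 hx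
    obtain ⟨sv, hs⟩ := s
    have aux : ∀ (t : ℕ) (h : t < a + b - 2), fmass (x ⟨t, h⟩) = fmass (x ⟨0, h0N⟩) := by
      intro t
      induction t with
      | zero => intro h; rfl
      | succ k ih =>
        intro h
        have h1 : fmass (x ⟨k + 1, h⟩) = fmass (x ⟨k, by omega⟩) := by
          rw [← fmass_mapDomain Prod.fst (x ⟨k + 1, h⟩), ← hx2 k h, fmass_mapDomain]
        rw [h1]
        exact ih (by omega)
    exact aux sv hs
  -- embedded tuples belong to Pab
  have embmem : ∀ i ∈ Xab m a b, embP m a b i ∈ Pab := by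
    rintro i ⟨h0, hl, hfirst, hlast, hdiff⟩
    rw [hmem]
    constructor
    · rintro ⟨sv, hs⟩ p hp
      rw [embP_apply m a b i sv hs (by omega) (by omega),
        Finsupp.support_single_ne_zero _ one_ne_zero, Finset.mem_singleton] at hp
      subst hp
      refine ⟨fun h => (hdiff sv (by omega)).1 h, fun h => (hdiff sv (by omega)).2 h, ?_, ?_⟩
      · intro h
        subst h
        exact hfirst
      · intro h
        subst h
        have e : (⟨a + b - 3 + 1, by omega⟩ : Fin (a + b - 1)) = ⟨a + b - 2, hl⟩ :=
          Fin.ext (by simp; omega)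
        show i ⟨a + b - 3 + 1, by omega⟩ ∈ _
        rw [e]
        exact hlast
    · intro s hs
      rw [embP_apply m a b i s (by omega) (by omega) (by omega),
        embP_apply m a b i (s + 1) hs (by omega) (by omega),
        Finsupp.mapDomain_single, Finsupp.mapDomain_single]
  have embne : ∀ i, embP m a b i ≠ 0 := by
    intro i h0
    have h1 := congrFun h0 ⟨0, h0N⟩
    rw [embP_apply m a b i 0 h0N (by omega) (by omega)] at h1
    exact one_ne_zero (Finsupp.single_eq_zero.1 h1)
  have embm1 : ∀ i, fmass (embP m a b i ⟨0, h0N⟩) = 1 := by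
    intro i
    rw [embP_apply m a b i 0 h0N (by omega) (by omega)]
    exact fmass_single _ 1
  -- extraction of a level-one generator from a nonzero element
  have extract : ∀ x, x ∈ Pab → x ≠ 0 →
      ∃ i ∈ Xab m a b, x = embP m a b i + (x - embP m a b i) ∧
        x - embP m a b i ∈ Pab := by
    intro x hx hx0
    obtain ⟨hx1, hx2⟩ := (hmem x).1 hx
    have hne : (x ⟨0, h0N⟩).support.Nonempty := by
      rw [Finsupp.support_nonempty_iff]
      intro h0eq
      apply hx0
      funext s
      have hms := massc x hx s
      rw [h0eq] at hms
      exact fmass_eq_zero.1 (hms.trans (fmass_eq_zero.2 rfl))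
    set x' : ℕ → ((ZMod m × ZMod m) →₀ ℕ) :=
      fun s => if h : s < a + b - 2 then x ⟨s, h⟩ else 0 with hx'
    have hx'eq : ∀ (s : ℕ) (h : s < a + b - 2), x' s = x ⟨s, h⟩ := fun s h => dif_pos h
    have base : chainP x' 0 ∈ (x' 0).support := by
      have hne' : (x' 0).support.Nonempty := by rw [hx'eq 0 h0N]; exact hne
      rw [chainP, dif_pos hne']
      exact hne'.choose_spec
    have step : ∀ s : ℕ, s + 1 < a + b - 2 → chainP x' s ∈ (x' s).support →
        chainP x' (s + 1) ∈ (x' (s + 1)).support ∧ (chainP x' (s + 1)).1 = (chainP x' s).2 := by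
      intro s hs hmem'
      have h1 : (chainP x' s).2 ∈ (Finsupp.mapDomain Prod.snd (x' s)).support :=
        mem_support_mapDomain _ _ hmem'
      rw [hx'eq s (by omega), hx2 s hs] at h1
      have h2 := Finsupp.mapDomain_support h1
      rw [Finset.mem_image] at h2
      obtain ⟨q, hq, hq2⟩ := h2
      have hex : ∃ q ∈ (x' (s + 1)).support, q.1 = (chainP x' s).2 :=
        ⟨q, by rw [hx'eq (s + 1) hs]; exact hq, hq2⟩
      rw [chainP, dif_pos hex]
      exact ⟨hex.choose_spec.1, hex.choose_spec.2⟩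
    have mem : ∀ s (h : s < a + b - 2), chainP x' s ∈ (x' s).support := by
      intro s
      induction s with
      | zero => intro _; exact base
      | succ k ih => intro h; exact (step k h (ih (by omega))).1
    have link : ∀ s, s + 1 < a + b - 2 → (chainP x' (s + 1)).1 = (chainP x' s).2 :=
      fun s h => (step s h (mem s (by omega))).2
    set i : Fin (a + b - 1) → ZMod m :=
      fun k => if h : k.1 < a + b - 2 then (chainP x' k.1).1 else (chainP x' (a + b - 3)).2
      with hidef
    have hiv : ∀ (k : ℕ) (h : k < a + b - 2) (h' : k < a + b - 1),
        i ⟨k, h'⟩ = (chainP x' k).1 := fun k h h' => dif_pos h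
    have hiv2 : ∀ (k : ℕ) (hk : k < a + b - 2) (h' : k + 1 < a + b - 1),
        i ⟨k + 1, h'⟩ = (chainP x' k).2 := by
      intro k hk h'
      by_cases h : k + 1 < a + b - 2
      · rw [hiv _ h h', link k h]
      · have hk3 : k = a + b - 3 := by omega
        rw [hidef]
        dsimp only
        rw [dif_neg h, hk3]
    have hemb : ∀ (sv : ℕ) (hs : sv < a + b - 2),
        embP m a b i ⟨sv, hs⟩ = Finsupp.single (chainP x' sv) 1 := by
      intro sv hs
      rw [embP_apply m a b i sv hs (by omega) (by omega), hiv sv hs (by omega),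
        hiv2 sv hs (by omega)]
    have memx : ∀ (s : ℕ) (h : s < a + b - 2), chainP x' s ∈ (x ⟨s, h⟩).support := by
      intro s h
      rw [← hx'eq s h]
      exact mem s h
    have hiX : i ∈ Xab m a b := by
      refine ⟨by omega, by omega, ?_, ?_, ?_⟩
      · rw [hiv 0 h0N (by omega)]
        exact (hx1 ⟨0, h0N⟩ _ (memx 0 h0N)).2.2.1 rfl
      · have hne2 : ¬ (a + b - 2 < a + b - 2) := by omega
        have e : i ⟨a + b - 2, by omega⟩ = (chainP x' (a + b - 3)).2 := by
          rw [hidef]; dsimp only; rw [dif_neg hne2]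
        rw [e]
        have hm3 : a + b - 3 < a + b - 2 := by omega
        exact (hx1 ⟨a + b - 3, hm3⟩ _ (memx _ hm3)).2.2.2 rfl
      · intro k hk
        have hkN : k < a + b - 2 := by omega
        have hv := hx1 ⟨k, hkN⟩ _ (memx k hkN)
        constructor
        · intro h
          rw [hiv k hkN (by omega), hiv2 k hkN hk]
          exact hv.1 h
        · intro h
          rw [hiv k hkN (by omega), hiv2 k hkN hk]
          exact hv.2.1 h
    have hle : ∀ s : Fin (a + b - 2), embP m a b i s ≤ x s := by
      rintro ⟨sv, hs⟩
      rw [hemb sv hs, Finsupp.single_le_iff]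
      exact Nat.one_le_iff_ne_zero.2 (Finsupp.mem_support_iff.1 (memx sv hs))
    have dx : ∀ s : Fin (a + b - 2),
        x s = embP m a b i s + (x - embP m a b i) s :=
      fun s => (add_tsub_cancel_of_le (hle s)).symm
    refine ⟨i, hiX, funext dx, ?_⟩
    rw [hmem]
    constructor
    · intro s p hp
      apply hx1 s p
      rw [Finsupp.mem_support_iff] at hp ⊢
      intro h0
      apply hp
      have ht : ((x - embP m a b i) s) p = x s p - embP m a b i s p :=
        Finsupp.tsub_apply _ _ _
      rw [ht, h0]
      exact Nat.zero_sub _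
    · intro s hs
      have e1 := hx2 s hs
      obtain ⟨-, hy2⟩ := (hmem _).1 (embmem i hiX)
      have e2 := hy2 s hs
      rw [dx ⟨s, by omega⟩, dx ⟨s + 1, hs⟩, Finsupp.mapDomain_add, Finsupp.mapDomain_add,
        e2] at e1
      exact finsupp_add_left_cancel e1
  have hSsub : embP m a b '' Xab m a b ⊆ (Pab : Set (BigM m a b)) := by
    rintro _ ⟨i, hi, rfl⟩
    exact embmem i hi
  have gen : ∀ n (x : BigM m a b), x ∈ Pab → fmass (x ⟨0, h0N⟩) = n →
      x ∈ AddSubmonoid.closure (embP m a b '' Xab m a b) := by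
    intro n
    induction n using Nat.strong_induction_on with
    | _ n ih =>
      intro x hx hmassx
      by_cases hx0 : x = 0
      · rw [hx0]; exact zero_mem _
      · obtain ⟨i, hiX, hdecomp, hz⟩ := extract x hx hx0
        have hmm : fmass (x ⟨0, h0N⟩) =
            fmass (embP m a b i ⟨0, h0N⟩) + fmass ((x - embP m a b i) ⟨0, h0N⟩) := by
          conv_lhs => rw [hdecomp]
          exact fmass_add _ _
        have hmz : fmass ((x - embP m a b i) ⟨0, h0N⟩) < n := by
          have := embm1 i
          omega
        rw [hdecomp]
        exact add_mem (AddSubmonoid.subset_closure ⟨i, hiX, rfl⟩)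
          (ih _ hmz _ hz rfl)
  have pos_of_ne : ∀ y : BigM m a b, y ∈ Pab → y ≠ 0 → 1 ≤ fmass (y ⟨0, h0N⟩) := by
    intro y hy hy0
    have hex : ∃ t, y t ≠ 0 := by
      by_contra h
      push_neg at h
      exact hy0 (funext h)
    obtain ⟨t, ht⟩ := hex
    have h1 := massc y hy t
    have h2 : fmass (y t) ≠ 0 := fun hh => ht (fmass_eq_zero.1 hh)
    omega
  constructor
  · apply le_antisymm
    · exact AddSubmonoid.closure_le.2 hSsub
    · intro x hx
      exact gen _ x hx rfl
  · intro x
    constructor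
    · rintro ⟨i, hiX, rfl⟩
      refine ⟨embmem i hiX, embne i, ?_⟩
      rintro ⟨y, z, hy, hz, hy0, hz0, hxyz⟩
      have h1 := embm1 i
      rw [hxyz] at h1
      rw [show (y + z) (⟨0, h0N⟩ : Fin (a + b - 2)) = y ⟨0, h0N⟩ + z ⟨0, h0N⟩ from rfl,
        fmass_add] at h1
      have h2 := pos_of_ne y hy hy0
      have h3 := pos_of_ne z hz hz0
      omega
    · rintro ⟨hx, hx0, hnd⟩
      obtain ⟨i, hiX, hdecomp, hz⟩ := extract x hx hx0
      by_cases hz0 : x - embP m a b i = 0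
      · rw [hz0, add_zero] at hdecomp
        exact ⟨i, hiX, hdecomp.symm⟩
      · exact absurd ⟨embP m a b i, x - embP m a b i, embmem i hiX, hz, embne i, hz0,
          hdecomp⟩ hnd
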